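/- For any j ≥ 0 and any finite training set {x_i}, the normalized empirical scattering variance is non-increasing with depth: σ²(2^{−(j+1)/2} S_{j+1} x) ≤ σ²(2^{−j/2} S_j x), where σ²(S_j x) = Σ_i ‖S_j x_i‖² − ‖Σ_i S_j x_i‖². -/

import Mathlib

/-- One Haar scattering layer with a pointwise absolute value on every output
coordinate: `S_{j+1} x = |H_j S_j x|`, where `H_j` computes pair sums (even
output indices) and pair differences (odd output indices) for the pairing `π`. -/
noncomputable def absHaarLayer {d : ℕ} (π : Equiv.Perm (Fin d)) (x : Fin d → ℝ) : Fin d → ℝ :=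
  fun m =>
    if (m : ℕ) % 2 = 0 then
      |x (π m) + x (π ⟨((m : ℕ) + 1) % d, Nat.mod_lt _ (Nat.lt_of_le_of_lt (Nat.zero_le _) m.isLt)⟩)|
    else
      |x (π ⟨(m : ℕ) - 1, Nat.lt_of_le_of_lt (Nat.sub_le _ _) m.isLt⟩) - x (π m)|

/-- Iterated Haar scattering `S_{j+1} x = |H_j S_j x|`. -/
noncomputable def absHaarScatter {d : ℕ} (π : ℕ → Equiv.Perm (Fin d)) :
    ℕ → (Fin d → ℝ) → Fin d → ℝ
  | 0, x => x
  | (J + 1), x => absHaarLayer (π J) (absHaarScatter π J x)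

/-- Non-normalized empirical variance of a family of vectors:
`σ²(v) = Σ_i ‖v i‖² − ‖Σ_i v i‖²`. -/
noncomputable def empVar {N d : ℕ} (v : Fin N → EuclideanSpace ℝ (Fin d)) : ℝ :=
  (∑ i, ‖v i‖ ^ 2) - ‖∑ i, v i‖ ^ 2


/-- The linear Haar layer (without abs). -/
noncomputable def haarLin {d : ℕ} (π : Equiv.Perm (Fin d)) (x : Fin d → ℝ) : Fin d → ℝ :=
  fun m =>
    if (m : ℕ) % 2 = 0 then
      x (π m) + x (π ⟨((m : ℕ) + 1) % d, Nat.mod_lt _ (Nat.lt_of_le_of_lt (Nat.zero_le _) m.isLt)⟩)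
    else
      x (π ⟨(m : ℕ) - 1, Nat.lt_of_le_of_lt (Nat.sub_le _ _) m.isLt⟩) - x (π m)


lemma absHaarLayer_eq_abs {d : ℕ} (π : Equiv.Perm (Fin d)) (x : Fin d → ℝ) (m : Fin d) :
    absHaarLayer π x m = |haarLin π x m| := by
  unfold absHaarLayer haarLin
  split <;> rfl

lemma sum_range_two_mul (f : ℕ → ℝ) (k : ℕ) :
    ∑ m ∈ Finset.range (2 * k), f m = ∑ i ∈ Finset.range k, (f (2 * i) + f (2 * i + 1)) := by
  induction k with
  | zero => simp
  | succ n ih =>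
      rw [Nat.mul_succ, Finset.sum_range_succ, Finset.sum_range_succ, Finset.sum_range_succ, ← ih]
      ring_nf

lemma haarLin_sq_sum {d : ℕ} (hd : Even d) (π : Equiv.Perm (Fin d)) (y : Fin d → ℝ) :
    ∑ m : Fin d, (haarLin π y m) ^ 2 = 2 * ∑ m : Fin d, (y m) ^ 2 := by
  rcases Nat.eq_zero_or_pos d with h0 | hd0
  · subst h0; simp
  obtain ⟨k, hk⟩ := hd
  have hdk : d = 2 * k := by omega
  have key : ∀ (F : Fin d → ℝ),
      ∑ m : Fin d, F m = ∑ n ∈ Finset.range d, F ⟨n % d, Nat.mod_lt _ hd0⟩ := by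
    intro F
    rw [← Fin.sum_univ_eq_sum_range (fun n => F ⟨n % d, Nat.mod_lt _ hd0⟩) d]
    apply Finset.sum_congr rfl
    intro m _
    congr 1
    exact Fin.ext (by simp [Nat.mod_eq_of_lt m.isLt])
  rw [show ∑ m : Fin d, (y m) ^ 2 = ∑ m : Fin d, (y (π m)) ^ 2 from
      (Equiv.sum_comp π fun m => (y m) ^ 2).symm,
    key (fun m => (haarLin π y m) ^ 2), key (fun m => (y (π m)) ^ 2),
    show Finset.range d = Finset.range (2 * k) from by rw [hdk],
    sum_range_two_mul, sum_range_two_mul, Finset.mul_sum]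
  apply Finset.sum_congr rfl
  intro i hi
  have hik : i < k := Finset.mem_range.mp hi
  have h1 : 2 * i < d := by omega
  have h2 : 2 * i + 1 < d := by omega
  have e1 : (2 * i) % d = 2 * i := Nat.mod_eq_of_lt h1
  have e2 : (2 * i + 1) % d = 2 * i + 1 := Nat.mod_eq_of_lt h2
  have m1 : (⟨(2 * i) % d, Nat.mod_lt _ hd0⟩ : Fin d) = ⟨2 * i, h1⟩ := Fin.ext e1
  have m2 : (⟨(2 * i + 1) % d, Nat.mod_lt _ hd0⟩ : Fin d) = ⟨2 * i + 1, h2⟩ := Fin.ext e2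
  rw [m1, m2]
  have v1 : haarLin π y ⟨2 * i, h1⟩ = y (π ⟨2 * i, h1⟩) + y (π ⟨2 * i + 1, h2⟩) := by
    unfold haarLin
    rw [if_pos (by simp [Nat.mul_mod_right])]
    congr 2
    exact Fin.ext (by simp [e2])
  have v2 : haarLin π y ⟨2 * i + 1, h2⟩ = y (π ⟨2 * i, h1⟩) - y (π ⟨2 * i + 1, h2⟩) := by
    unfold haarLin
    rw [if_neg (by simp)]
    congr 2
  rw [v1, v2]
  ring

lemma haarLin_sum {d N : ℕ} (π : Equiv.Perm (Fin d)) (y : Fin N → Fin d → ℝ) (m : Fin d) :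
    haarLin π (∑ i, y i) m = ∑ i, haarLin π (y i) m := by
  unfold haarLin
  split <;> simp [Finset.sum_apply, Finset.sum_add_distrib, Finset.sum_sub_distrib]

lemma enorm_sq {d : ℕ} (v : EuclideanSpace ℝ (Fin d)) : ‖v‖ ^ 2 = ∑ m, (v m) ^ 2 := by
  rw [EuclideanSpace.norm_eq, Real.sq_sqrt (by positivity)]
  simp [sq_abs]

/-- Cast a plain function to `EuclideanSpace`. -/
def toE {d : ℕ} (v : Fin d → ℝ) : EuclideanSpace ℝ (Fin d) := WithLp.toLp 2 v

lemma enorm_sq' {d : ℕ} (v : Fin d → ℝ) : ‖toE v‖ ^ 2 = ∑ m, (v m) ^ 2 :=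
  enorm_sq (toE v)

lemma empVar_layer_aux {d N : ℕ} (hd : Even d) (π₀ : Equiv.Perm (Fin d))
    (a : Fin N → Fin d → ℝ) (c c' : ℝ) (key : c ^ 2 * 2 = c' ^ 2) :
    empVar (fun i => c • (WithLp.toLp 2 (absHaarLayer π₀ (a i)) : EuclideanSpace ℝ (Fin d))) ≤
      empVar (fun i => c' • (WithLp.toLp 2 (a i) : EuclideanSpace ℝ (Fin d))) := by
  unfold empVar
  show (∑ i, ‖c • toE (absHaarLayer π₀ (a i))‖ ^ 2)
        - ‖∑ i, c • toE (absHaarLayer π₀ (a i))‖ ^ 2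
      ≤ (∑ i, ‖c' • toE (a i)‖ ^ 2) - ‖∑ i, c' • toE (a i)‖ ^ 2
  have nsmul : ∀ (t : ℝ) (v : Fin d → ℝ), ‖t • toE v‖ ^ 2 = t ^ 2 * ‖toE v‖ ^ 2 := by
    intro t v
    rw [norm_smul, mul_pow, Real.norm_eq_abs, sq_abs]
  have hsm : ∀ (t : ℝ) (v : Fin N → Fin d → ℝ),
      (∑ i, t • toE (v i)) = t • toE (∑ i, v i) := by
    intro t v
    rw [← Finset.smul_sum]
    simp only [toE, WithLp.toLp_sum]
  have hbn : ∀ i, ‖toE (absHaarLayer π₀ (a i))‖ ^ 2 = 2 * ‖toE (a i)‖ ^ 2 := by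
    intro i
    rw [enorm_sq', enorm_sq', ← haarLin_sq_sum hd π₀ (a i)]
    exact Finset.sum_congr rfl fun m _ => by
      rw [absHaarLayer_eq_abs, sq_abs]
  have hkey2 : 2 * ‖toE (∑ i, a i)‖ ^ 2 ≤ ‖toE (∑ i, absHaarLayer π₀ (a i))‖ ^ 2 := by
    rw [enorm_sq', enorm_sq', ← haarLin_sq_sum hd π₀ (∑ i, a i)]
    apply Finset.sum_le_sum
    intro m _
    rw [Finset.sum_apply, haarLin_sum]
    calc (∑ i, haarLin π₀ (a i) m) ^ 2
        = |∑ i, haarLin π₀ (a i) m| ^ 2 := (sq_abs _).symm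
      _ ≤ (∑ i, |haarLin π₀ (a i) m|) ^ 2 := by
          apply pow_le_pow_left₀ (abs_nonneg _)
          exact Finset.abs_sum_le_sum_abs _ _
      _ = (∑ i, absHaarLayer π₀ (a i) m) ^ 2 := by
          congr 1
          exact Finset.sum_congr rfl fun i _ => (absHaarLayer_eq_abs _ _ _).symm
  rw [hsm, hsm]
  simp only [nsmul]
  have hs : (∑ i, c ^ 2 * ‖toE (absHaarLayer π₀ (a i))‖ ^ 2)
      = ∑ i, c' ^ 2 * ‖toE (a i)‖ ^ 2 := by
    apply Finset.sum_congr rfl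
    intro i _
    rw [hbn, ← key]; ring
  have hmul := mul_le_mul_of_nonneg_left hkey2 (sq_nonneg c)
  have h3 : c' ^ 2 * ‖toE (∑ i, a i)‖ ^ 2 = c ^ 2 * (2 * ‖toE (∑ i, a i)‖ ^ 2) := by
    rw [← key]; ring
  linarith [hs, hmul, h3]


/-- The normalized empirical scattering variance is non-increasing with depth:
`σ²(2^{−(j+1)/2} S_{j+1} x) ≤ σ²(2^{−j/2} S_j x)`. -/
theorem empVar_haarScatter_le {d N : ℕ} (hd : Even d) (π : ℕ → Equiv.Perm (Fin d))
    (x : Fin N → Fin d → ℝ) (j : ℕ) :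
    empVar (fun i => ((2 : ℝ) ^ (-((j : ℝ) + 1) / 2)) •
        (WithLp.toLp 2 (absHaarScatter π (j + 1) (x i)) : EuclideanSpace ℝ (Fin d))) ≤
      empVar (fun i => ((2 : ℝ) ^ (-(j : ℝ) / 2)) •
        (WithLp.toLp 2 (absHaarScatter π j (x i)) : EuclideanSpace ℝ (Fin d))) := by
  have h2 : ∀ r : ℝ, ((2 : ℝ) ^ r) ^ 2 = (2 : ℝ) ^ (r * 2) := by
    intro r
    rw [← Real.rpow_natCast ((2 : ℝ) ^ r) 2, ← Real.rpow_mul (by norm_num)]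
    norm_num
  have key : ((2 : ℝ) ^ (-((j : ℝ) + 1) / 2)) ^ 2 * 2 = ((2 : ℝ) ^ (-(j : ℝ) / 2)) ^ 2 := by
    rw [h2, h2, show (-((j : ℝ) + 1) / 2) * 2 = -(j : ℝ) - 1 by ring,
      show (-(j : ℝ) / 2) * 2 = (-(j : ℝ) - 1) + 1 by ring,
      Real.rpow_add (by norm_num : (0:ℝ) < 2), Real.rpow_one]
  simp only [absHaarScatter]
  exact empVar_layer_aux hd (π j) (fun i => absHaarScatter π j (x i)) _ _ key
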